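/- Let p be a prime, B(x) ∈ M_n(𝔽_p(x)), and Δ(F) = F' + B·F on 𝔽_p(x)^n. The following are equivalent: (1) the 𝔽_p(x^p)-vector space ker Δ has dimension n; (2) Δ^p = 0. -/

import Mathlib

open Polynomial
set_option synthInstance.maxHeartbeats 1000000
set_option maxHeartbeats 1000000

/-- Formal derivative of a rational function, via the quotient rule on the
canonical numerator/denominator representation. -/
noncomputable def rderiv {F : Type*} [Field F] (f : RatFunc F) : RatFunc F :=
  algebraMap (Polynomial F) (RatFunc F)
      (Polynomial.derivative f.num * f.denom - f.num * Polynomial.derivative f.denom) /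
    algebraMap (Polynomial F) (RatFunc F) (f.denom ^ 2)

variable {F : Type*} [Field F]

local notation "φ" => algebraMap (Polynomial F) (RatFunc F)

theorem rderiv_div (a : Polynomial F) {b : Polynomial F} (hb : b ≠ 0) :
    rderiv (φ a / φ b) =
      φ (derivative a * b - a * derivative b) / φ (b ^ 2) := by
  set f : RatFunc F := φ a / φ b with hf
  have hbK : φ b ≠ 0 := by
    simpa using RatFunc.algebraMap_ne_zero hb
  have hdK : φ f.denom ≠ 0 := by
    simpa using RatFunc.algebraMap_ne_zero f.denom_ne_zero
  -- cross identity:  a * f.denom = f.num * b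
  have key : a * f.denom = f.num * b := by
    apply RatFunc.algebraMap_injective F
    rw [map_mul, map_mul]
    have h1 : φ a = f * φ b := by
      rw [hf, div_mul_cancel₀ _ hbK]
    have h2 : φ f.num = f * φ f.denom := (div_eq_iff hdK).mp f.num_div_denom
    rw [h1, h2]; ring
  rw [rderiv]
  rw [div_eq_div_iff (by simpa using RatFunc.algebraMap_ne_zero (pow_ne_zero 2 f.denom_ne_zero))
    (by simpa using RatFunc.algebraMap_ne_zero (pow_ne_zero 2 hb))]
  rw [← map_mul, ← map_mul]
  congr 1
  -- polynomial identity
  have := congrArg derivative key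
  rw [derivative_mul, derivative_mul] at this
  linear_combination (-(b * f.denom)) * this +
    (b * derivative f.denom + derivative b * f.denom) * key

theorem rderiv_algebraMap (a : Polynomial F) : rderiv (φ a) = φ (derivative a) := by
  have h := rderiv_div (F := F) a (one_ne_zero)
  simp at h
  simpa using h

theorem repr_num_denom (f : RatFunc F) : f = φ f.num / φ f.denom := (f.num_div_denom).symm

theorem rderiv_add (f g : RatFunc F) : rderiv (f + g) = rderiv f + rderiv g := by
  obtain ⟨a, b, hb, rfl⟩ : ∃ a b, b ≠ 0 ∧ f = φ a / φ b :=
    ⟨f.num, f.denom, f.denom_ne_zero, (repr_num_denom f)⟩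
  obtain ⟨c, d, hd, rfl⟩ : ∃ c d, d ≠ 0 ∧ g = φ c / φ d :=
    ⟨g.num, g.denom, g.denom_ne_zero, (repr_num_denom g)⟩
  have hbK : φ b ≠ 0 := by simpa using RatFunc.algebraMap_ne_zero hb
  have hdK : φ d ≠ 0 := by simpa using RatFunc.algebraMap_ne_zero hd
  have h : φ a / φ b + φ c / φ d = φ (a * d + b * c) / φ (b * d) := by
    rw [div_add_div _ _ hbK hdK, ← map_mul, ← map_mul, ← map_mul, ← map_add]
  rw [h, rderiv_div _ (mul_ne_zero hb hd), rderiv_div a hb, rderiv_div c hd]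
  clear h
  have h1 : φ (b ^ 2) ≠ 0 := by simpa using RatFunc.algebraMap_ne_zero (pow_ne_zero 2 hb)
  have h2 : φ (d ^ 2) ≠ 0 := by simpa using RatFunc.algebraMap_ne_zero (pow_ne_zero 2 hd)
  have h3 : φ ((b * d) ^ 2) ≠ 0 := by
    simpa using RatFunc.algebraMap_ne_zero (pow_ne_zero 2 (mul_ne_zero hb hd))
  field_simp
  simp only [derivative_mul, derivative_add, map_mul, map_sub, map_pow, map_add, map_neg]
  ring

theorem rderiv_mul (f g : RatFunc F) : rderiv (f * g) = rderiv f * g + f * rderiv g := by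
  obtain ⟨a, b, hb, rfl⟩ : ∃ a b, b ≠ 0 ∧ f = φ a / φ b :=
    ⟨f.num, f.denom, f.denom_ne_zero, (repr_num_denom f)⟩
  obtain ⟨c, d, hd, rfl⟩ : ∃ c d, d ≠ 0 ∧ g = φ c / φ d :=
    ⟨g.num, g.denom, g.denom_ne_zero, (repr_num_denom g)⟩
  have hbK : φ b ≠ 0 := by simpa using RatFunc.algebraMap_ne_zero hb
  have hdK : φ d ≠ 0 := by simpa using RatFunc.algebraMap_ne_zero hd
  have h : φ a / φ b * (φ c / φ d) = φ (a * c) / φ (b * d) := by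
    rw [div_mul_div_comm, ← map_mul, ← map_mul]
  rw [h, rderiv_div _ (mul_ne_zero hb hd), rderiv_div a hb, rderiv_div c hd]
  clear h
  have h1 : φ (b ^ 2) ≠ 0 := by simpa using RatFunc.algebraMap_ne_zero (pow_ne_zero 2 hb)
  have h2 : φ (d ^ 2) ≠ 0 := by simpa using RatFunc.algebraMap_ne_zero (pow_ne_zero 2 hd)
  have h3 : φ ((b * d) ^ 2) ≠ 0 := by
    simpa using RatFunc.algebraMap_ne_zero (pow_ne_zero 2 (mul_ne_zero hb hd))
  field_simp
  simp only [derivative_mul, derivative_add, map_mul, map_sub, map_pow, map_add, map_neg]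
  ring

theorem rderiv_zero : rderiv (0 : RatFunc F) = 0 := by
  have := rderiv_algebraMap (0 : Polynomial F)
  simpa using this

theorem rderiv_one : rderiv (1 : RatFunc F) = 0 := by
  have := rderiv_algebraMap (1 : Polynomial F)
  simpa using this

theorem rderiv_neg (f : RatFunc F) : rderiv (-f) = -rderiv f := by
  have h := rderiv_add f (-f)
  rw [add_neg_cancel, rderiv_zero] at h
  linear_combination -h

theorem rderiv_inv (f : RatFunc F) (hf : rderiv f = 0) : rderiv f⁻¹ = 0 := by
  rcases eq_or_ne f 0 with rfl | h0
  · simp [rderiv_zero]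
  · have h := rderiv_mul f f⁻¹
    rw [mul_inv_cancel₀ h0, rderiv_one, hf, zero_mul, zero_add] at h
    exact (mul_eq_zero.mp h.symm).resolve_left h0

/-- The subfield of constants of `RatFunc F`. -/
noncomputable def consts (F : Type*) [Field F] : Subfield (RatFunc F) where
  carrier := {f | rderiv f = 0}
  mul_mem' := by
    intro a b ha hb
    simp only [Set.mem_setOf_eq] at *
    rw [rderiv_mul, ha, hb, zero_mul, mul_zero, add_zero]
  one_mem' := rderiv_one
  add_mem' := by
    intro a b ha hb
    simp only [Set.mem_setOf_eq] at *
    rw [rderiv_add, ha, hb, add_zero]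
  zero_mem' := rderiv_zero
  neg_mem' := by
    intro a ha
    simp only [Set.mem_setOf_eq] at *
    rw [rderiv_neg, ha, neg_zero]
  inv_mem' := fun a ha => rderiv_inv a ha

theorem mem_consts {f : RatFunc F} : f ∈ consts F ↔ rderiv f = 0 := Iff.rfl

theorem rderiv_sum {ι : Type*} (s : Finset ι) (f : ι → RatFunc F) :
    rderiv (∑ i ∈ s, f i) = ∑ i ∈ s, rderiv (f i) := 
by
  induction s using Finset.cons_induction with
  | empty => simp [rderiv_zero]
  | cons a s ha ih => rw [Finset.sum_cons, Finset.sum_cons, rderiv_add, ih]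

theorem rderiv_pow (f : RatFunc F) (k : ℕ) :
    rderiv (f ^ k) = (k : RatFunc F) * f ^ (k - 1) * rderiv f := by
  induction k with
  | zero => simp [rderiv_one]
  | succ k ih =>
    rcases Nat.eq_zero_or_pos k with rfl | hk
    · simp [rderiv_mul]
    · rw [pow_succ, rderiv_mul, ih]
      have h1 : k - 1 + 1 = k := Nat.succ_pred_eq_of_pos hk
      rw [Nat.add_sub_cancel]
      have hfk : f ^ k = f ^ (k - 1) * f := by rw [← pow_succ, h1]
      rw [hfk]
      push_cast
      ring

theorem rderiv_natCast (m : ℕ) : rderiv ((m : RatFunc F)) = 0 := by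
  have := rderiv_algebraMap (m : Polynomial F)
  rw [Polynomial.derivative_natCast] at this
  simpa using this

theorem finrank_ker_pow_le {R V : Type*} [DivisionRing R] [AddCommGroup V] [Module R V]
    [FiniteDimensional R V] (f : V →ₗ[R] V) (k : ℕ) :
    Module.finrank R (LinearMap.ker (f ^ k)) ≤ k * Module.finrank R (LinearMap.ker f) := by
  induction k with
  | zero => simp [pow_zero, Module.End.one_eq_id, LinearMap.ker_id]
  | succ k ih =>
    have hmap : ∀ x ∈ LinearMap.ker (f ^ (k + 1)), f x ∈ LinearMap.ker (f ^ k) := by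
      intro x hx
      rw [LinearMap.mem_ker] at *
      rw [← Module.End.mul_apply, ← pow_succ]
      exact hx
    set g := f.restrict hmap with hg
    have h1 := LinearMap.finrank_range_add_finrank_ker g
    have h2 : Module.finrank R (LinearMap.range g)
        ≤ Module.finrank R (LinearMap.ker (f ^ k)) := (LinearMap.range g).finrank_le
    have h3 : Module.finrank R (LinearMap.ker g) ≤ Module.finrank R (LinearMap.ker f) := by
      set ι := (LinearMap.ker (f ^ (k + 1))).subtype.comp (LinearMap.ker g).subtype with hι
      have hinj : Function.Injective ι :=
        (Submodule.injective_subtype _).comp (Submodule.injective_subtype _)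
      have hrange : LinearMap.range ι ≤ LinearMap.ker f := by
        rintro y ⟨x, rfl⟩
        rw [LinearMap.mem_ker]
        have hx : g x = 0 := x.2
        have : ((g x : LinearMap.ker (f ^ k)) : V) = f ((x : LinearMap.ker (f ^ (k + 1))) : V) :=
          LinearMap.restrict_coe_apply f hmap _
        rw [hx] at this
        simp only [ZeroMemClass.coe_zero] at this
        exact this.symm
      calc Module.finrank R (LinearMap.ker g)
          = Module.finrank R (LinearMap.range ι) := (LinearMap.finrank_range_of_inj hinj).symm
        _ ≤ Module.finrank R (LinearMap.ker f) := Submodule.finrank_mono hrange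
    calc Module.finrank R (LinearMap.ker (f ^ (k + 1)))
        = Module.finrank R (LinearMap.range g) + Module.finrank R (LinearMap.ker g) := h1.symm
      _ ≤ k * Module.finrank R (LinearMap.ker f) + Module.finrank R (LinearMap.ker f) := by
          exact Nat.add_le_add (le_trans h2 ih) h3
      _ = (k + 1) * Module.finrank R (LinearMap.ker f) := by ring

section CharPSection

variable (p : ℕ) [Fact p.Prime]

local notation "K" => RatFunc (ZMod p)
local notation "𝒞" => consts (ZMod p)
local notation "φp" => algebraMap (Polynomial (ZMod p)) (RatFunc (ZMod p))

instance kCharP : CharP (RatFunc (ZMod p)) p := charP_of_injective_algebraMap' (ZMod p) (A := RatFunc (ZMod p)) p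

theorem pow_p_mem_consts (f : K) : f ^ p ∈ 𝒞 := by
  rw [mem_consts, rderiv_pow]
  have : ((p : ℕ) : K) = 0 := CharP.cast_eq_zero K p
  rw [this, zero_mul, zero_mul]

theorem natCast_mem_consts (m : ℕ) : ((m : ℕ) : K) ∈ 𝒞 := rderiv_natCast m

theorem algebraMap_C_mem_consts (c : ZMod p) : φp (Polynomial.C c) ∈ 𝒞 := by
  rw [mem_consts, rderiv_algebraMap, derivative_C, map_zero]

theorem span_pow_X_eq_top :
    Submodule.span 𝒞 (Set.range fun i : Fin p => (φp X) ^ (i : ℕ)) = ⊤ := by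
  have hp : 0 < p := (Fact.out : p.Prime).pos
  rw [eq_top_iff]
  rintro f -
  set S := Submodule.span 𝒞 (Set.range fun i : Fin p => (φp X) ^ (i : ℕ)) with hS
  have halg : ∀ a : Polynomial (ZMod p), φp a ∈ S := by
    intro a
    induction a using Polynomial.induction_on' with
    | add u v hu hv => rw [map_add]; exact S.add_mem hu hv
    | monomial k c =>
      have hmod : k % p < p := Nat.mod_lt _ hp
      have hrepr : φp (Polynomial.monomial k c)
          = (φp (Polynomial.C c) * ((φp X) ^ p) ^ (k / p)) * (φp X) ^ (k % p) := by
        rw [← map_pow, ← map_pow, ← map_pow, ← map_mul, ← map_mul,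
          (RatFunc.algebraMap_injective (ZMod p)).eq_iff]
        rw [← pow_mul, mul_assoc, ← pow_add, Nat.div_add_mod,
          Polynomial.C_mul_X_pow_eq_monomial]
      have hg : φp (Polynomial.C c) * ((φp X) ^ p) ^ (k / p) ∈ 𝒞 :=
        mul_mem (algebraMap_C_mem_consts p c) (pow_mem (pow_p_mem_consts p _) _)
      rw [hrepr]
      have : (φp (Polynomial.C c) * ((φp X) ^ p) ^ (k / p)) * (φp X) ^ (k % p)
          = (⟨_, hg⟩ : 𝒞) • (φp X) ^ (k % p) := rfl
      rw [this]
      exact S.smul_mem _ (Submodule.subset_span ⟨⟨k % p, hmod⟩, rfl⟩)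
  have hne : φp f.denom ≠ 0 := by simpa using RatFunc.algebraMap_ne_zero f.denom_ne_zero
  have hc : (φp f.denom ^ p)⁻¹ ∈ 𝒞 := inv_mem (pow_p_mem_consts p _)
  have key : ∀ (a b : Polynomial (ZMod p)), b ≠ 0 →
      φp a / φp b = (φp b ^ p)⁻¹ * φp (a * b ^ (p - 1)) := by
    intro a b hb
    have hbK : φp b ≠ 0 := by simpa using RatFunc.algebraMap_ne_zero hb
    rw [map_mul, map_pow]
    rw [eq_inv_mul_iff_mul_eq₀ (pow_ne_zero _ hbK), mul_comm, div_mul_eq_mul_div,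
      div_eq_iff hbK, mul_assoc, ← pow_succ, Nat.sub_add_cancel hp]
  rw [← f.num_div_denom, key f.num f.denom f.denom_ne_zero]
  exact S.smul_mem (⟨_, hc⟩ : 𝒞) (halg _)

theorem rderiv_X : rderiv (φp X) = 1 := by
  rw [rderiv_algebraMap, derivative_X, map_one]

theorem indep_aux : ∀ m, m ≤ p → ∀ g : ℕ → K, (∀ i, rderiv (g i) = 0) →
    (∑ i ∈ Finset.range m, g i * (φp X) ^ i) = 0 → ∀ i < m, g i = 0 := by
  intro m
  induction m with
  | zero => exact fun _ g _ _ i hi => absurd hi (Nat.not_lt_zero i)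
  | succ m ih =>
    intro hmp g hg hsum
    have hterm : ∀ j : ℕ, rderiv (g j * (φp X) ^ j)
        = g j * ((j : K) * (φp X) ^ (j - 1)) := by
      intro j
      rw [rderiv_mul, hg j, zero_mul, zero_add, rderiv_pow, rderiv_X, mul_one]
    have hgm : ∀ j < m, g (j + 1) = 0 := by
      have hd := congrArg rderiv hsum
      rw [rderiv_zero, rderiv_sum] at hd
      simp only [hterm] at hd
      rw [Finset.sum_range_succ'] at hd
      simp only [Nat.cast_zero, zero_mul, mul_zero, add_zero, Nat.add_sub_cancel,
        ← mul_assoc] at hd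
      have hg' : ∀ j : ℕ, rderiv (g (j + 1) * (((j + 1 : ℕ)) : K)) = 0 := by
        intro j
        rw [rderiv_mul, hg (j + 1), zero_mul, zero_add, rderiv_natCast, mul_zero]
      have hz := ih (Nat.le_of_succ_le hmp) (fun j => g (j + 1) * (((j + 1 : ℕ)) : K))
        hg' hd
      intro j hj
      have hcast : (((j + 1 : ℕ)) : K) ≠ 0 := by
        rw [Ne, CharP.cast_eq_zero_iff K p]
        exact Nat.not_dvd_of_pos_of_lt (Nat.succ_pos j) (by omega)
      have := hz j hj
      exact (mul_eq_zero.mp this).resolve_right hcast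
    intro i him
    match i with
    | (j + 1) => exact hgm j (by omega)
    | 0 =>
      rw [Finset.sum_range_succ'] at hsum
      rw [Finset.sum_eq_zero (fun x hx => by
        rw [hgm x (Finset.mem_range.mp hx), zero_mul])] at hsum
      simpa using hsum

theorem linearIndependent_pow_X :
    LinearIndependent 𝒞 (fun i : Fin p => (φp X) ^ (i : ℕ)) := by
  refine Fintype.linearIndependent_iff.mpr ?_
  intro g hg i
  classical
  set G : ℕ → K := fun j => if h : j < p then ((g ⟨j, h⟩ : 𝒞) : K) else 0 with hG
  have hgc : ∀ j, rderiv (G j) = 0 := by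
    intro j
    rw [hG]
    dsimp only
    split
    · exact (g _).2
    · exact rderiv_zero
  have hsum : ∑ j ∈ Finset.range p, G j * (φp X) ^ j = 0 := by
    rw [← Fin.sum_univ_eq_sum_range (fun j => G j * (φp X) ^ j) p]
    rw [← hg]
    refine Finset.sum_congr rfl fun i _ => ?_
    rw [hG]
    dsimp only
    rw [dif_pos i.isLt]
    rfl
  have h0 := indep_aux p p le_rfl G hgc hsum i i.isLt
  rw [hG] at h0
  dsimp only at h0
  rw [dif_pos i.isLt] at h0
  ext
  simpa using h0

noncomputable def basisK : Module.Basis (Fin p) 𝒞 K :=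
  Module.Basis.mk (linearIndependent_pow_X p) (by rw [span_pow_X_eq_top p])

theorem finrank_consts : Module.finrank 𝒞 K = p := by
  rw [Module.finrank_eq_card_basis (basisK p), Fintype.card_fin]

instance fdK : FiniteDimensional 𝒞 K := Module.Finite.of_basis (basisK p)

theorem iterate_rderiv_sum_eq_zero : ∀ m, ∀ g : ℕ → K, (∀ i, rderiv (g i) = 0) →
    rderiv^[m] (∑ i ∈ Finset.range m, g i * (φp X) ^ i) = 0 := by
  intro m
  induction m with
  | zero => simp
  | succ m ih =>
    intro g hg
    rw [Function.iterate_succ_apply]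
    have hterm : ∀ j : ℕ, rderiv (g j * (φp X) ^ j)
        = g j * ((j : K) * (φp X) ^ (j - 1)) := by
      intro j
      rw [rderiv_mul, hg j, zero_mul, zero_add, rderiv_pow, rderiv_X, mul_one]
    rw [rderiv_sum]
    simp only [hterm]
    rw [Finset.sum_range_succ']
    simp only [Nat.cast_zero, zero_mul, mul_zero, add_zero, Nat.add_sub_cancel,
      ← mul_assoc]
    exact ih (fun j => g (j + 1) * (((j + 1 : ℕ)) : K)) (fun j => by
      rw [rderiv_mul, hg (j + 1), zero_mul, zero_add, rderiv_natCast, mul_zero])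

theorem iterate_rderiv_p (f : K) : rderiv^[p] f = 0 := by
  classical
  have hrepr := (basisK p).sum_repr f
  have hb : ∀ i : Fin p, basisK p i = (φp X) ^ (i : ℕ) := by
    intro i
    rw [basisK, Module.Basis.coe_mk]
  set G : ℕ → K := fun j => if h : j < p then (((basisK p).repr f ⟨j, h⟩ : 𝒞) : K) else 0
    with hG
  have hgc : ∀ j, rderiv (G j) = 0 := by
    intro j
    rw [hG]
    dsimp only
    split
    · exact ((basisK p).repr f _).2
    · exact rderiv_zero
  have hf : f = ∑ j ∈ Finset.range p, G j * (φp X) ^ j := by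
    rw [← Fin.sum_univ_eq_sum_range (fun j => G j * (φp X) ^ j) p]
    rw [← hrepr]
    refine Finset.sum_congr rfl fun i _ => ?_
    rw [hG]
    dsimp only
    rw [dif_pos i.isLt, hb i]
    rfl
  rw [hf]
  exact iterate_rderiv_sum_eq_zero p p G hgc

variable {n : ℕ}

noncomputable def deltaFun (B : Matrix (Fin n) (Fin n) K) (H : Fin n → K) : Fin n → K :=
  (fun j => rderiv (H j)) + B.mulVec H

variable (B : Matrix (Fin n) (Fin n) (RatFunc (ZMod p)))

theorem deltaFun_zero : deltaFun p B 0 = 0 := by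
  funext j
  simp [deltaFun, rderiv_zero, Matrix.mulVec_zero]

theorem deltaFun_add (x y : Fin n → K) :
    deltaFun p B (x + y) = deltaFun p B x + deltaFun p B y := by
  funext j
  simp only [deltaFun, Pi.add_apply, Matrix.mulVec_add, rderiv_add]
  ring

theorem deltaFun_sum {ι : Type*} (s : Finset ι) (v : ι → (Fin n → K)) :
    deltaFun p B (∑ i ∈ s, v i) = ∑ i ∈ s, deltaFun p B (v i) := by
  induction s using Finset.cons_induction with
  | empty => simp [deltaFun_zero]
  | cons a s ha ih => rw [Finset.sum_cons, Finset.sum_cons, deltaFun_add, ih]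

theorem deltaFun_smul (c : K) (x : Fin n → K) :
    deltaFun p B (c • x) = rderiv c • x + c • deltaFun p B x := by
  funext j
  simp only [deltaFun, Pi.add_apply, Pi.smul_apply, smul_eq_mul, Matrix.mulVec_smul]
  rw [rderiv_mul]
  ring

theorem iterate_deltaFun_smul (k : ℕ) (c : K) {v : Fin n → K} (hv : deltaFun p B v = 0) :
    (deltaFun p B)^[k] (c • v) = (rderiv^[k] c) • v := by
  induction k generalizing c with
  | zero => rfl
  | succ k ih =>
    rw [Function.iterate_succ_apply, Function.iterate_succ_apply]
    rw [deltaFun_smul, hv, smul_zero, add_zero]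
    exact ih (rderiv c)

theorem iterate_deltaFun_add (k : ℕ) (x y : Fin n → K) :
    (deltaFun p B)^[k] (x + y) = (deltaFun p B)^[k] x + (deltaFun p B)^[k] y := by
  induction k generalizing x y with
  | zero => rfl
  | succ k ih =>
    rw [Function.iterate_succ_apply, Function.iterate_succ_apply,
      Function.iterate_succ_apply, deltaFun_add]
    exact ih _ _

theorem indep_over_K (F : Fin n → (Fin n → K)) (hsol : ∀ i, deltaFun p B (F i) = 0)
    (hind : ∀ c : Fin n → K, (∀ i, rderiv (c i) = 0) → ∑ i, c i • F i = 0 → ∀ i, c i = 0) :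
    LinearIndependent K F := by
  refine Fintype.linearIndependent_iff.mpr ?_
  suffices claim : ∀ s : Finset (Fin n), ∀ g : Fin n → K, (∀ i, g i ≠ 0 → i ∈ s) →
      ∑ i, g i • F i = 0 → ∀ i, g i = 0 by
    exact fun g hg => claim Finset.univ g (fun i _ => Finset.mem_univ i) hg
  intro s
  induction s using Finset.strongInduction with
  | _ s ih =>
    intro g hsupp hrel
    by_cases hconst : ∀ i, rderiv (g i) = 0
    · exact hind g hconst hrel
    · exfalso
      push_neg at hconst
      obtain ⟨i0, hi0⟩ := hconst
      have hgi0 : g i0 ≠ 0 := by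
        intro h0
        rw [h0, rderiv_zero] at hi0
        exact hi0 rfl
      have hi0s : i0 ∈ s := hsupp i0 hgi0
      set h : Fin n → K := fun i => g i / g i0 with hh
      have hrel' : ∑ i, h i • F i = 0 := by
        have heq : ∑ i, h i • F i = (g i0)⁻¹ • ∑ i, g i • F i := by
          rw [Finset.smul_sum]
          refine Finset.sum_congr rfl fun i _ => ?_
          rw [smul_smul, hh]
          dsimp only
          rw [div_eq_inv_mul]
        rw [heq, hrel, smul_zero]
      have hd : ∑ i, rderiv (h i) • F i = 0 := by
        have h1 : deltaFun p B (∑ i, h i • F i) = 0 := by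
          rw [hrel', deltaFun_zero]
        rw [deltaFun_sum] at h1
        simp only [deltaFun_smul, hsol, smul_zero, add_zero] at h1
        exact h1
      have hzero : ∀ i, rderiv (h i) = 0 := by
        refine ih (s.erase i0) (Finset.erase_ssubset hi0s) (fun i => rderiv (h i)) ?_ hd
        intro i hne
        have hgi : g i ≠ 0 := by
          intro h0
          apply hne
          rw [hh]
          dsimp only
          rw [h0, zero_div, rderiv_zero]
        have hii0 : i ≠ i0 := by
          intro h0
          apply hne
          rw [hh, h0]
          dsimp only
          rw [div_self hgi0, rderiv_one]
        exact Finset.mem_erase.mpr ⟨hii0, hsupp i hgi⟩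
      have := hind h hzero hrel' i0
      rw [hh] at this
      dsimp only at this
      rw [div_self hgi0] at this
      exact one_ne_zero this

theorem iterate_deltaFun_zero (k : ℕ) : (deltaFun p B)^[k] 0 = 0 := by
  induction k with
  | zero => rfl
  | succ k ih => rw [Function.iterate_succ_apply, deltaFun_zero]; exact ih

theorem iterate_deltaFun_sum {ι : Type*} (k : ℕ) (s : Finset ι) (v : ι → (Fin n → K)) :
    (deltaFun p B)^[k] (∑ i ∈ s, v i) = ∑ i ∈ s, (deltaFun p B)^[k] (v i) := by
  induction s using Finset.cons_induction with
  | empty => simp [iterate_deltaFun_zero]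
  | cons a s ha ih =>
    rw [Finset.sum_cons, Finset.sum_cons, iterate_deltaFun_add, ih]

theorem forward_dir (F : Fin n → (Fin n → RatFunc (ZMod p)))
    (hsol : ∀ i, deltaFun p B (F i) = 0)
    (hind : ∀ c : Fin n → RatFunc (ZMod p), (∀ i, rderiv (c i) = 0) →
      ∑ i, c i • F i = 0 → ∀ i, c i = 0) :
    ∀ G, (deltaFun p B)^[p] G = 0 := by
  intro G
  rcases Nat.eq_zero_or_pos n with hn0 | hpos
  · subst hn0
    have hG0 : G = 0 := Subsingleton.elim G 0
    rw [hG0]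
    exact iterate_deltaFun_zero p B p
  haveI : Nonempty (Fin n) := ⟨⟨0, hpos⟩⟩
  have hli : LinearIndependent (RatFunc (ZMod p)) F := indep_over_K p B F hsol hind
  have hcard : Fintype.card (Fin n)
      = Module.finrank (RatFunc (ZMod p)) (Fin n → RatFunc (ZMod p)) := by
    rw [Module.finrank_fin_fun, Fintype.card_fin]
  let bF := basisOfLinearIndependentOfCardEqFinrank hli hcard
  have hbF : ⇑bF = F := coe_basisOfLinearIndependentOfCardEqFinrank hli hcard
  have hG : G = ∑ i, bF.repr G i • F i := by
    have h0 := (bF.sum_repr G).symm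
    rw [hbF] at h0
    exact h0
  rw [hG, iterate_deltaFun_sum]
  refine Finset.sum_eq_zero fun i _ => ?_
  rw [iterate_deltaFun_smul p B p _ (hsol i), iterate_rderiv_p, zero_smul]

theorem backward_dir (hcurv : ∀ G, (deltaFun p B)^[p] G = 0) :
    ∃ F : Fin n → (Fin n → RatFunc (ZMod p)),
      (∀ i, deltaFun p B (F i) = 0) ∧
      ∀ c : Fin n → RatFunc (ZMod p), (∀ i, rderiv (c i) = 0) →
        ∑ i, c i • F i = 0 → ∀ i, c i = 0 := by
  classical
  set Δₗ : (Fin n → K) →ₗ[𝒞] (Fin n → K) :=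
    { toFun := deltaFun p B
      map_add' := deltaFun_add p B
      map_smul' := by
        intro c x
        have h := deltaFun_smul p B (c : K) x
        rw [c.2, zero_smul, zero_add] at h
        exact h } with hΔₗ
  have hkertop : LinearMap.ker (Δₗ ^ p) = ⊤ := by
    rw [eq_top_iff]
    intro x _
    rw [LinearMap.mem_ker, Module.End.pow_apply]
    exact hcurv x
  have hVrank : Module.finrank 𝒞 (Fin n → K) = n * p := by
    rw [Module.finrank_pi_fintype, Finset.sum_const, Finset.card_univ, Fintype.card_fin,
      smul_eq_mul, finrank_consts]
  have hbound := finrank_ker_pow_le Δₗ p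
  rw [hkertop, finrank_top, hVrank] at hbound
  have hp : 0 < p := (Fact.out : p.Prime).pos
  have hn : n ≤ Module.finrank 𝒞 (LinearMap.ker Δₗ) := by
    by_contra hlt
    push_neg at hlt
    nlinarith [hbound, hlt, hp]
  let bW := Module.finBasis 𝒞 (LinearMap.ker Δₗ)
  have hWrank : Module.finrank 𝒞 (LinearMap.ker Δₗ)
      = Module.finrank 𝒞 (LinearMap.ker Δₗ) := rfl
  set F : Fin n → (Fin n → K) := fun i => ((bW (Fin.castLE hn i)) : Fin n → K) with hF
  refine ⟨F, ?_, ?_⟩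
  · intro i
    exact LinearMap.mem_ker.mp (bW (Fin.castLE hn i)).2
  · intro c hc hsum i
    have hli : LinearIndependent 𝒞 F := by
      have h1 := bW.linearIndependent.comp (Fin.castLE hn) (Fin.castLE_injective hn)
      exact h1.map' (LinearMap.ker Δₗ).subtype (Submodule.ker_subtype _)
    set c' : Fin n → 𝒞 := fun i => ⟨c i, hc i⟩ with hc'
    have hsum' : ∑ j, c' j • F j = 0 := by
      have heq : ∑ j, c' j • F j = ∑ j, c j • F j := Finset.sum_congr rfl fun j _ => rfl
      rw [heq, hsum]
    have h0 := Fintype.linearIndependent_iff.mp hli c' hsum' i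
    exact Subtype.ext_iff.mp h0

end CharPSection

set_option synthInstance.maxHeartbeats 1000000 in
/-- **Cartier's lemma**: let `p` be a prime, `B(x) ∈ Mₙ(𝔽_p(x))`, and
`Δ : F ↦ F' + B·F` on `𝔽_p(x)ⁿ`.  The space of rational solutions `ker Δ`, which is a
vector space over the field of constants `𝔽_p(xᵖ) = {f : f' = 0}` of dimension at most
`n`, has dimension exactly `n` (i.e. there are `n` solutions linearly independent over
the constants) if and only if the `p`-curvature `Δ^p` vanishes. -/
theorem cartier_lemma (p : ℕ) [Fact p.Prime] (n : ℕ)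
    (B : Matrix (Fin n) (Fin n) (RatFunc (ZMod p))) :
    (∃ F : Fin n → (Fin n → RatFunc (ZMod p)),
        (∀ i, (fun j => rderiv (F i j)) + B.mulVec (F i) = 0) ∧
        ∀ c : Fin n → RatFunc (ZMod p), (∀ i, rderiv (c i) = 0) →
          ∑ i, c i • F i = 0 → ∀ i, c i = 0) ↔
      ∀ G : Fin n → RatFunc (ZMod p),
        (fun H : Fin n → RatFunc (ZMod p) =>
          (fun j => rderiv (H j)) + B.mulVec H)^[p] G = 0 := by
  have hfun : (fun H : Fin n → RatFunc (ZMod p) =>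
      (fun j => rderiv (H j)) + B.mulVec H) = deltaFun p B := rfl
  constructor
  · rintro ⟨F, hsol, hind⟩ G
    rw [hfun]
    exact forward_dir p B F hsol hind G
  · intro hcurv
    simp only [hfun] at hcurv
    obtain ⟨F, h1, h2⟩ := backward_dir p B hcurv
    exact ⟨F, h1, h2⟩
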